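/- Let M ≥ N ≥ 1 be integers. Then for every x > 0, ( Σ_{k=0}^{N−1} ( ∏_{i=1}^{k} (2i−1)/(2i+2(M−N)) ) · L_{2k}^{(2(M−N))}(2Mx) ) · x^{M−N+1/2} e^{−Mx} = −((2N−1)/2) · ( ∏_{j=1}^{N−1} (2j−1)/(2j+2(M−N)) ) · ∫_x^∞ t^{M−N−1/2} e^{−Mt} · L_{2N−1}^{(2(M−N))}(2Mt) dt, the integral being absolutely convergent. -/

import Mathlib

open MeasureTheory

/-- The generalized Laguerre polynomial
`L_n^(α)(x) = ∑_{k=0}^{n} (-1)^k (n+α choose n-k) x^k / k!`. -/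
noncomputable def genLaguerre (n α : ℕ) (x : ℝ) : ℝ :=
  ∑ k ∈ Finset.range (n + 1),
    (-1 : ℝ) ^ k * ((n + α).choose (n - k) : ℝ) * x ^ k / (k.factorial : ℝ)

/-- The skew inner product
`⟨f, g⟩₄ = ∫_0^∞ (f(x) g'(x) - f'(x) g(x)) x^(2(M-N)+1) e^(-2Mx) dx`. -/
noncomputable def skewInner (M N : ℕ) (f g : ℝ → ℝ) : ℝ :=
  ∫ x in Set.Ioi (0 : ℝ),
    (f x * deriv g x - deriv f x * g x) * x ^ (2 * (M - N) + 1) *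
      Real.exp (-(2 * (M : ℝ)) * x)

/-! ### Auxiliary development -/

section Aux

open Polynomial Filter Real

/-- Polynomial version of the generalized Laguerre polynomial. -/
noncomputable def lagP (n α : ℕ) : Polynomial ℝ :=
  ∑ k ∈ Finset.range (n + 1),
    Polynomial.C ((-1 : ℝ) ^ k * ((n + α).choose (n - k) : ℝ) / (k.factorial : ℝ)) * Polynomial.X ^ k

lemma genLaguerre_eval (n α : ℕ) (y : ℝ) : genLaguerre n α y = (lagP n α).eval y := by
  simp only [genLaguerre, lagP, Polynomial.eval_finset_sum, Polynomial.eval_mul,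
    Polynomial.eval_C, Polynomial.eval_pow, Polynomial.eval_X]
  exact Finset.sum_congr rfl fun k _ => by ring

lemma coeff_lagP (n α j : ℕ) :
    (lagP n α).coeff j =
      if j ≤ n then (-1 : ℝ) ^ j * ((n + α).choose (n - j) : ℝ) / (j.factorial : ℝ) else 0 := by
  simp only [lagP, Polynomial.finset_sum_coeff, Polynomial.coeff_C_mul, Polynomial.coeff_X_pow]
  rw [Finset.sum_congr rfl (fun k _ => by rw [mul_ite, mul_one, mul_zero]),
    Finset.sum_ite_eq (Finset.range (n+1)) j]
  simp [Nat.lt_succ_iff]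

lemma natkey (α j q : ℕ) :
    (α + 1 + 2*j) * Nat.choose (q+j+1+α) (q+1) + j * Nat.choose (q+j+1+α) (q+2)
      + (q+j+1+α) * Nat.choose (q+j+α) q
    = (q+j+2) * Nat.choose (q+j+2+α) (q+2) := by
  have h1 : Nat.choose (q+j+2+α) (q+2) =
      Nat.choose (q+j+1+α) (q+1) + Nat.choose (q+j+1+α) (q+2) := by
    rw [show q+j+2+α = (q+j+1+α)+1 by ring, show q+2 = (q+1)+1 from rfl]
    exact Nat.choose_succ_succ _ _
  have h2 : (q+j+1+α) * Nat.choose (q+j+α) q = Nat.choose (q+j+1+α) (q+1) * (q+1) := by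
    rw [show q+j+1+α = (q+j+α)+1 by ring]
    exact Nat.add_one_mul_choose_eq _ _
  have h3 : Nat.choose (q+j+1+α) (q+2) * (q+2) = Nat.choose (q+j+1+α) (q+1) * ((q+j+1+α) - (q+1)) :=
    Nat.choose_succ_right_eq _ _
  rw [show (q+j+1+α) - (q+1) = j + α by omega] at h3
  zify at h1 h2 h3 ⊢
  linear_combination (-(q+j+2) : ℤ) * h1 + h2 - h3

lemma keyE (p α : ℕ) :
    (C ((α:ℝ)+1) - X) * lagP (p+1) α + C 2 * (X * derivative (lagP (p+1) α))
      = C ((p:ℝ)+2) * lagP (p+2) α - C ((p:ℝ)+1+(α:ℝ)) * lagP p α := by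
  apply Polynomial.ext
  intro j
  rcases j with _ | i
  · simp only [coeff_add, coeff_sub, coeff_mul_C, mul_coeff_zero, coeff_C_mul, coeff_X,
      coeff_C_zero, coeff_lagP, Polynomial.coeff_X_zero, zero_mul, mul_zero]
    norm_num
    have keyR := congrArg (Nat.cast (R := ℝ)) (natkey α 0 p)
    norm_num at keyR
    linear_combination keyR
  · simp only [coeff_add, coeff_sub, coeff_C_mul, coeff_X_mul, sub_mul, coeff_derivative,
      coeff_lagP, Polynomial.coeff_X]
    by_cases h1 : i + 1 ≤ p
    · obtain ⟨q, rfl⟩ : ∃ q, p = q + i + 1 := ⟨p - i - 1, by omega⟩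
      have key := natkey α (i+1) q
      rw [if_pos (by omega), if_pos (by omega), if_pos (by omega), if_pos (by omega),
        show q+i+1+1 - (i+1) = q+1 by omega, show q+i+1+1 - i = q+2 by omega,
        show q+i+1+2 - (i+1) = q+2 by omega, show q+i+1 - (i+1) = q by omega,
        Nat.factorial_succ]
      simp only [show q+(i+1) = q+i+1 from by omega] at key
      have keyR := congrArg (Nat.cast (R := ℝ)) key
      push_cast at keyR ⊢
      have hf : (i.factorial : ℝ) ≠ 0 := by exact_mod_cast i.factorial_ne_zero
      linear_combination (norm := skip) (-((-1:ℝ)^i / (((i:ℝ)+1) * (i.factorial:ℝ)))) * keyR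
      field_simp
      ring
    · by_cases h2 : i = p
      · subst h2
        rw [if_pos (by omega), if_pos (by omega), if_pos (by omega), if_neg (by omega),
          show i+1 - (i+1) = 0 by omega, show i+1 - i = 1 by omega,
          show i+2 - (i+1) = 1 by omega, Nat.choose_zero_right, Nat.choose_one_right,
          Nat.choose_one_right, Nat.factorial_succ]
        have hf : (i.factorial : ℝ) ≠ 0 := by exact_mod_cast i.factorial_ne_zero
        push_cast
        field_simp

        ring
      · by_cases h3 : i = p + 1
        · subst h3
          rw [if_neg (by omega), if_pos (by omega), if_pos (by omega), if_neg (by omega),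
            show p+1 - (p+1) = 0 by omega, show p+2 - (p+1+1) = 0 by omega,
            Nat.choose_zero_right, Nat.choose_zero_right, Nat.factorial_succ,
            Nat.factorial_succ]
          have hf : (p.factorial : ℝ) ≠ 0 := by exact_mod_cast p.factorial_ne_zero
          push_cast
          field_simp
          rw [Nat.factorial_succ]
          push_cast
          ring
        · rw [if_neg (by omega), if_neg (by omega), if_neg (by omega), if_neg (by omega)]
          ring

lemma keyE_eval (p α : ℕ) (y : ℝ) :
    ((α:ℝ)+1-y) * (lagP (p+1) α).eval y + 2*y*((Polynomial.derivative (lagP (p+1) α)).eval y)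
      = ((p:ℝ)+2) * (lagP (p+2) α).eval y - ((p:ℝ)+1+(α:ℝ)) * (lagP p α).eval y := by
  have h := congrArg (Polynomial.eval y) (keyE p α)
  simp only [Polynomial.eval_add, Polynomial.eval_sub, Polynomial.eval_mul, Polynomial.eval_C,
    Polynomial.eval_X] at h
  linear_combination h

lemma lagP_zero (α : ℕ) : lagP 0 α = Polynomial.C 1 := by
  simp [lagP]

lemma eval_lagP_one (α : ℕ) (y : ℝ) : (lagP 1 α).eval y = (α:ℝ) + 1 - y := by
  simp [lagP, Finset.sum_range_succ, Nat.choose_one_right]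
  ring

/-- The telescoping identity. -/
lemma tele (α : ℕ) (y : ℝ) (N : ℕ) (hN : 1 ≤ N) :
    ∑ k ∈ Finset.range N,
      (∏ i ∈ Finset.Icc 1 k, (2*(i:ℝ)-1)/(2*(i:ℝ)+(α:ℝ))) *
        (((α:ℝ)+1-y) * (lagP (2*k) α).eval y + 2*y*((Polynomial.derivative (lagP (2*k) α)).eval y))
    = (2*(N:ℝ)-1) * (∏ i ∈ Finset.Icc 1 (N-1), (2*(i:ℝ)-1)/(2*(i:ℝ)+(α:ℝ))) *
        (lagP (2*N-1) α).eval y := by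
  induction N, hN using Nat.le_induction with
  | base =>
    simp only [Finset.range_one, Finset.sum_singleton, Nat.mul_zero, lagP_zero]
    norm_num [eval_lagP_one]
  | succ n hn ih =>
    obtain ⟨m, rfl⟩ : ∃ m, n = m + 1 := ⟨n - 1, by omega⟩
    rw [show m+1-1 = m from rfl, show 2*(m+1)-1 = 2*m+1 by omega] at ih
    have hkey := keyE_eval (2*m+1) α y
    rw [show 2*m+1+1 = 2*(m+1) by ring, show 2*m+1+2 = 2*m+3 by ring] at hkey
    have hprod : (∏ i ∈ Finset.Icc 1 (m+1), (2*(i:ℝ)-1)/(2*(i:ℝ)+(α:ℝ)))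
        = (∏ i ∈ Finset.Icc 1 m, (2*(i:ℝ)-1)/(2*(i:ℝ)+(α:ℝ)))
          * ((2*((m:ℝ)+1)-1)/(2*((m:ℝ)+1)+(α:ℝ))) := by
      rw [Finset.prod_Icc_succ_top (by omega : 1 ≤ m+1)]
      push_cast
      ring
    rw [Finset.sum_range_succ, ih, hkey, show m+1+1-1 = m+1 from rfl,
      show 2*(m+1+1)-1 = 2*m+3 by omega, hprod]
    set P := ∏ i ∈ Finset.Icc 1 m, (2*(i:ℝ)-1)/(2*(i:ℝ)+(α:ℝ)) with hP
    have hd : 2*((m:ℝ)+1)+(α:ℝ) ≠ 0 := by positivity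
    push_cast
    field_simp
    ring

/-- `Q(t) t^s e^{-bt} → 0` at `+∞`. -/
lemma tendsto_poly_rpow_exp (Q : Polynomial ℝ) (s b : ℝ) (hb : 0 < b) :
    Filter.Tendsto (fun t : ℝ => Q.eval t * t ^ s * Real.exp (-b*t))
      Filter.atTop (nhds 0) := by
  induction Q using Polynomial.induction_on' with
  | add p q hp hq =>
    have := hp.add hq
    rw [add_zero] at this
    exact this.congr (by intro t; simp [Polynomial.eval_add]; ring)
  | monomial n a =>
    have h := (tendsto_rpow_mul_exp_neg_mul_atTop_nhds_zero ((n:ℝ)+s) b hb).const_mul a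
    rw [mul_zero] at h
    apply h.congr'
    filter_upwards [Filter.eventually_gt_atTop (0:ℝ)] with t ht
    rw [Polynomial.eval_monomial, Real.rpow_add ht, Real.rpow_natCast]
    ring

end Aux

/-- The integral representation of `ψ_{2N-2}`:
`(∑_{k=0}^{N-1} (∏_{i=1}^k (2i-1)/(2i+2(M-N))) L_{2k}^{(2(M-N))}(2Mx)) x^{M-N+1/2} e^{-Mx}
 = -((2N-1)/2) (∏_{j=1}^{N-1} (2j-1)/(2j+2(M-N)))
     ∫_x^∞ t^{M-N-1/2} e^{-Mt} L_{2N-1}^{(2(M-N))}(2Mt) dt`,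
the integral being absolutely convergent. -/
theorem stmt_15 (M N : ℕ) (hN : 1 ≤ N) (hMN : N ≤ M) (x : ℝ) (hx : 0 < x) :
    IntegrableOn
      (fun t : ℝ => t ^ ((M : ℝ) - (N : ℝ) - 1 / 2) * Real.exp (-(M : ℝ) * t) *
        genLaguerre (2 * N - 1) (2 * (M - N)) (2 * (M : ℝ) * t)) (Set.Ioi x) ∧
    (∑ k ∈ Finset.range N,
        (∏ i ∈ Finset.Icc 1 k,
            (2 * (i : ℝ) - 1) / (2 * (i : ℝ) + 2 * ((M : ℝ) - (N : ℝ)))) *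
          genLaguerre (2 * k) (2 * (M - N)) (2 * (M : ℝ) * x)) *
        x ^ ((M : ℝ) - (N : ℝ) + 1 / 2) * Real.exp (-(M : ℝ) * x)
      = -((2 * (N : ℝ) - 1) / 2) *
          (∏ j ∈ Finset.Icc 1 (N - 1),
              (2 * (j : ℝ) - 1) / (2 * (j : ℝ) + 2 * ((M : ℝ) - (N : ℝ)))) *
          ∫ t in Set.Ioi x, t ^ ((M : ℝ) - (N : ℝ) - 1 / 2) * Real.exp (-(M : ℝ) * t) *
            genLaguerre (2 * N - 1) (2 * (M - N)) (2 * (M : ℝ) * t) := by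
  have hαR : ((2*(M-N) : ℕ) : ℝ) = 2 * ((M:ℝ) - (N:ℝ)) := by
    rw [Nat.cast_mul, Nat.cast_sub hMN]; norm_num
  have hM1 : (1:ℝ) ≤ (M:ℝ) := by exact_mod_cast hN.trans hMN
  have hMpos : (0:ℝ) < (M:ℝ) := by linarith
  set α := 2 * (M - N) with hα
  set γ : ℝ := (M:ℝ) - (N:ℝ) - 1/2 with hγ
  set f : ℝ → ℝ := fun t => t ^ γ * Real.exp (-(M:ℝ)*t) * (lagP (2*N-1) α).eval (2*(M:ℝ)*t)
    with hf
  -- rewrite the statement into the `f`, `c`, `lagP` language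
  have hfeq : (fun t : ℝ => t ^ ((M : ℝ) - (N : ℝ) - 1 / 2) * Real.exp (-(M : ℝ) * t) *
      genLaguerre (2 * N - 1) α (2 * (M : ℝ) * t)) = f := by
    funext t
    rw [genLaguerre_eval, hf]
  -- integrability
  have hcont : ContinuousOn f (Set.Ici x) := by
    intro t ht
    have ht0 : t ≠ 0 := ne_of_gt (lt_of_lt_of_le hx ht)
    apply ContinuousAt.continuousWithinAt
    rw [hf]
    exact ((Real.continuousAt_rpow_const t γ (Or.inl ht0)).mul
        (Real.continuous_exp.comp (continuous_const.mul continuous_id)).continuousAt).mul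
      (((lagP (2*N-1) α).continuous.comp (continuous_const.mul continuous_id)).continuousAt)
  have hlittle : f =o[Filter.atTop] (fun t => Real.exp (-(1/2 : ℝ)*t)) := by
    rw [Asymptotics.isLittleO_iff_tendsto (fun t h => absurd h (Real.exp_ne_zero _))]
    have htend := tendsto_poly_rpow_exp ((lagP (2*N-1) α).comp
      (Polynomial.C (2*(M:ℝ)) * Polynomial.X)) γ ((M:ℝ) - 1/2) (by linarith)
    apply htend.congr
    intro t
    rw [eq_div_iff (Real.exp_ne_zero _), hf]
    simp only [Polynomial.eval_comp, Polynomial.eval_mul, Polynomial.eval_C, Polynomial.eval_X]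
    rw [show (-(M:ℝ)*t) = (-((M:ℝ)-1/2)*t) + (-(1/2:ℝ)*t) by ring, Real.exp_add]
    ring
  have hint : IntegrableOn f (Set.Ioi x) :=
    integrable_of_isBigO_exp_neg (by norm_num : (0:ℝ) < 1/2) hcont hlittle.isBigO
  set ψ : ℝ → ℝ := fun t =>
    (∑ k ∈ Finset.range N, (∏ i ∈ Finset.Icc 1 k, (2*(i:ℝ)-1)/(2*(i:ℝ)+(α:ℝ))) * (lagP (2*k) α).eval (2*(M:ℝ)*t)) * t ^ (γ+1) *
      Real.exp (-(M:ℝ)*t) with hψdef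
  -- the derivative identity
  have hderiv : ∀ t ∈ Set.Ici x, HasDerivAt ψ ((2*(N:ℝ)-1)/2 * (∏ i ∈ Finset.Icc 1 (N-1), (2*(i:ℝ)-1)/(2*(i:ℝ)+(α:ℝ))) * f t) t := by
    intro t ht
    have ht0 : (0:ℝ) < t := lt_of_lt_of_le hx ht
    have h2M : HasDerivAt (fun u : ℝ => 2*(M:ℝ)*u) (2*(M:ℝ)) t := by
      simpa using (hasDerivAt_id t).const_mul (2*(M:ℝ))
    have hS : HasDerivAt (fun u : ℝ => ∑ k ∈ Finset.range N, (∏ i ∈ Finset.Icc 1 k, (2*(i:ℝ)-1)/(2*(i:ℝ)+(α:ℝ))) * (lagP (2*k) α).eval (2*(M:ℝ)*u))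
        (∑ k ∈ Finset.range N,
          (∏ i ∈ Finset.Icc 1 k, (2*(i:ℝ)-1)/(2*(i:ℝ)+(α:ℝ))) * ((Polynomial.derivative (lagP (2*k) α)).eval (2*(M:ℝ)*t) * (2*(M:ℝ)))) t := by
      apply HasDerivAt.fun_sum
      intro k _
      exact (((lagP (2*k) α).hasDerivAt (2*(M:ℝ)*t)).comp t h2M).const_mul ((∏ i ∈ Finset.Icc 1 k, (2*(i:ℝ)-1)/(2*(i:ℝ)+(α:ℝ))))
    have hrpow : HasDerivAt (fun u : ℝ => u ^ (γ+1)) ((γ+1) * t ^ γ) t := by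
      have h := Real.hasDerivAt_rpow_const (x := t) (p := γ+1) (Or.inl (ne_of_gt ht0))
      simpa using h
    have hexp : HasDerivAt (fun u : ℝ => Real.exp (-(M:ℝ)*u)) (-(M:ℝ) * Real.exp (-(M:ℝ)*t)) t := by
      have h1 : HasDerivAt (fun u : ℝ => -(M:ℝ)*u) (-(M:ℝ)) t := by
        simpa using (hasDerivAt_id t).const_mul (-(M:ℝ))
      simpa [mul_comm] using h1.exp
    have hψ := (hS.fun_mul hrpow).fun_mul hexp
    convert hψ using 1
    case e'_4 => rfl
    case e'_5 => rfl
    -- now the algebraic identity for the derivative value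
    have key := tele α (2*(M:ℝ)*t) N hN
    have hhalf : γ + 1 = ((α:ℝ)+1)/2 := by rw [hα, hαR, hγ]; ring
    have merge : (∑ k ∈ Finset.range N,
          (∏ i ∈ Finset.Icc 1 k, (2*(i:ℝ)-1)/(2*(i:ℝ)+(α:ℝ))) * ((Polynomial.derivative (lagP (2*k) α)).eval (2*(M:ℝ)*t) * (2*(M:ℝ)))) * t
        + (∑ k ∈ Finset.range N, (∏ i ∈ Finset.Icc 1 k, (2*(i:ℝ)-1)/(2*(i:ℝ)+(α:ℝ))) * (lagP (2*k) α).eval (2*(M:ℝ)*t)) * ((γ+1) - (M:ℝ)*t)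
        = (1/2) * ∑ k ∈ Finset.range N,
            (∏ i ∈ Finset.Icc 1 k, (2*(i:ℝ)-1)/(2*(i:ℝ)+(α:ℝ))) * (((α:ℝ)+1-(2*(M:ℝ)*t)) * (lagP (2*k) α).eval (2*(M:ℝ)*t)
              + 2*(2*(M:ℝ)*t)*((Polynomial.derivative (lagP (2*k) α)).eval (2*(M:ℝ)*t))) := by
      rw [Finset.sum_mul, Finset.sum_mul, Finset.mul_sum, ← Finset.sum_add_distrib]
      refine Finset.sum_congr rfl fun k _ => ?_
      rw [hhalf]
      ring
    have comb := merge.trans (by rw [key])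
    have hty : t ^ (γ+1) = t ^ γ * t := Real.rpow_add_one (ne_of_gt ht0) γ
    rw [hf, hty]
    linear_combination (-(t ^ γ * Real.exp (-(M:ℝ)*t))) * comb
  -- limit of ψ at infinity
  have hψ0 : Filter.Tendsto ψ Filter.atTop (nhds 0) := by
    have h := tendsto_poly_rpow_exp
      (∑ k ∈ Finset.range N, Polynomial.C ((∏ i ∈ Finset.Icc 1 k, (2*(i:ℝ)-1)/(2*(i:ℝ)+(α:ℝ)))) *
        ((lagP (2*k) α).comp (Polynomial.C (2*(M:ℝ)) * Polynomial.X))) (γ+1) (M:ℝ) hMpos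
    apply h.congr
    intro t
    simp only [Polynomial.eval_finset_sum, Polynomial.eval_mul, Polynomial.eval_C,
      Polynomial.eval_comp, Polynomial.eval_X, hψdef]
  have hint' : IntegrableOn (fun t => (2*(N:ℝ)-1)/2 * (∏ i ∈ Finset.Icc 1 (N-1), (2*(i:ℝ)-1)/(2*(i:ℝ)+(α:ℝ))) * f t) (Set.Ioi x) :=
    hint.const_mul _
  have hFTC := integral_Ioi_of_hasDerivAt_of_tendsto' hderiv hint' hψ0
  rw [MeasureTheory.integral_const_mul] at hFTC
  constructor
  · rw [hfeq]; exact hint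
  · rw [hfeq, show (M:ℝ) - (N:ℝ) + 1/2 = γ + 1 by rw [hγ]; ring]
    have hcprod : (∏ j ∈ Finset.Icc 1 (N - 1),
        (2 * (j : ℝ) - 1) / (2 * (j : ℝ) + 2 * ((M : ℝ) - (N : ℝ)))) = (∏ i ∈ Finset.Icc 1 (N-1), (2*(i:ℝ)-1)/(2*(i:ℝ)+(α:ℝ))) := by
      simp only [← hαR]
    have hgoal : ∀ k, genLaguerre (2*k) α (2*(M:ℝ)*x) = (lagP (2*k) α).eval (2*(M:ℝ)*x) :=
      fun k => genLaguerre_eval _ _ _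
    calc (∑ k ∈ Finset.range N,
        (∏ i ∈ Finset.Icc 1 k, (2 * (i : ℝ) - 1) / (2 * (i : ℝ) + 2 * ((M : ℝ) - (N : ℝ)))) *
          genLaguerre (2 * k) α (2 * (M : ℝ) * x)) * x ^ (γ+1) * Real.exp (-(M : ℝ) * x)
        = ψ x := by
          rw [hψdef]
          congr 1
          congr 1
          refine Finset.sum_congr rfl fun k _ => ?_
          rw [hgoal k]
          simp only [← hαR]
      _ = -((2 * (N : ℝ) - 1) / 2) * (∏ i ∈ Finset.Icc 1 (N-1), (2*(i:ℝ)-1)/(2*(i:ℝ)+(α:ℝ))) * ∫ t in Set.Ioi x, f t := by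
          have : (2*(N:ℝ)-1)/2 * (∏ i ∈ Finset.Icc 1 (N-1), (2*(i:ℝ)-1)/(2*(i:ℝ)+(α:ℝ))) * ∫ t in Set.Ioi x, f t = 0 - ψ x := hFTC
          linarith
      _ = -((2 * (N : ℝ) - 1) / 2) *
          (∏ j ∈ Finset.Icc 1 (N - 1),
              (2 * (j : ℝ) - 1) / (2 * (j : ℝ) + 2 * ((M : ℝ) - (N : ℝ)))) *
          ∫ t in Set.Ioi x, f t := by rw [hcprod]
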